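/- Let G be the group ⟨a,b | a^{b^2} = a·a^b, [a,a^b] = 1⟩, realized as (ℤ × ℤ) ⋊ ℤ where the generator t of ℤ acts on (u,v) ∈ ℤ × ℤ by (u,v)·t = (v, u+v). Then for every nonzero integer n and every nonzero element (u,v) of ℤ × ℤ, the action of t^n does not fix (u,v). Equivalently, the centralizer in ℤ × ℤ of any element outside the normal subgroup ℤ × ℤ is trivial. -/

import Mathlib

/-- The automorphism of ℤ × ℤ given by conjugation by `t` in the group
`⟨a,b | a^{b²} = a·a^b, [a,a^b] = 1⟩ ≅ (ℤ × ℤ) ⋊ ℤ`: `(u,v) ↦ (v, u+v)`. -/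
def fibAut : AddAut (ℤ × ℤ) where
  toFun p := (p.2, p.1 + p.2)
  invFun p := (p.2 - p.1, p.1)
  left_inv p := by simp
  right_inv p := by simp
  map_add' p q := by
    ext <;> simp <;> abel

noncomputable def phi : ℝ := (1 + Real.sqrt 5) / 2

lemma phi_sq : phi ^ 2 = phi + 1 := by
  have h5 : Real.sqrt 5 ^ 2 = 5 := Real.sq_sqrt (by norm_num)
  unfold phi
  nlinarith [h5]

lemma phi_pos : 0 < phi := by
  have := Real.sqrt_nonneg 5
  unfold phi; linarith

lemma one_lt_phi : 1 < phi := by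
  have : (1:ℝ) < Real.sqrt 5 := by
    have : Real.sqrt 1 < Real.sqrt 5 := Real.sqrt_lt_sqrt (by norm_num) (by norm_num)
    simpa using this
  unfold phi; linarith

lemma irrational_phi : Irrational phi := by
  have h5 : Irrational (Real.sqrt 5) := (by norm_num : Nat.Prime 5).irrational_sqrt
  have h1 : Irrational ((1:ℚ) + Real.sqrt 5) := h5.ratCast_add 1
  have := h1.div_natCast (by norm_num : (2:ℕ) ≠ 0)
  simpa [phi, div_eq_mul_inv] using this

noncomputable def L (p : ℤ × ℤ) : ℝ := (p.1 : ℝ) + (p.2 : ℝ) * phi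

lemma L_fibAut (p : ℤ × ℤ) : L (fibAut p) = phi * L p := by
  have h : fibAut p = (p.2, p.1 + p.2) := rfl
  simp only [L, h]
  push_cast
  linear_combination (-(p.2:ℝ)) * phi_sq

lemma L_fibAut_inv (p : ℤ × ℤ) : L ((-fibAut) p) = phi⁻¹ * L p := by
  have h := L_fibAut ((-fibAut) p)
  have h' : fibAut ((-fibAut) p) = p := by simp
  rw [h'] at h
  rw [h, inv_mul_cancel_left₀ (ne_of_gt phi_pos)]

lemma L_zpow (n : ℤ) (p : ℤ × ℤ) : L ((n • fibAut) p) = phi ^ n * L p := by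
  induction n using Int.induction_on generalizing p with
  | zero => simp
  | succ k ih =>
      rw [add_one_zsmul, AddAut.add_apply, ih, L_fibAut,
        zpow_add_one₀ (ne_of_gt phi_pos)]
      ring
  | pred k ih =>
      rw [show -(k:ℤ) - 1 = -(k:ℤ) + -1 from by ring, add_zsmul, AddAut.add_apply,
        ih, show ((-1:ℤ) • fibAut) = -fibAut from by simp, L_fibAut_inv,
        zpow_add₀ (ne_of_gt phi_pos)]
      simp [zpow_neg]
      ring

/-- For every nonzero integer `n`, the action of `tⁿ` on ℤ × ℤ fixes no nonzero element:
the centralizer in G' = ℤ × ℤ of any element of G \ G' is trivial. -/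
theorem stmt_7 (n : ℤ) (hn : n ≠ 0) (p : ℤ × ℤ) (hp : p ≠ 0) :
    (n • fibAut) p ≠ p := by
  intro hfix
  have hL : phi ^ n * L p = L p := by rw [← L_zpow, hfix]
  have hpow : phi ^ n ≠ 1 := by
    intro h
    exact hn (zpow_right_injective₀ phi_pos (ne_of_lt one_lt_phi).symm
      (by simpa using h : phi ^ n = phi ^ (0:ℤ)))
  have hLp : L p = 0 := by
    by_contra h
    exact hpow (mul_right_cancel₀ h (by linarith))
  have h2 : p.2 = 0 := by
    by_contra h2
    have hphi : phi = -(p.1 : ℝ) / (p.2 : ℝ) := by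
      have hz : (p.2 : ℝ) ≠ 0 := Int.cast_ne_zero.mpr h2
      field_simp
      unfold L at hLp
      linarith
    exact irrational_phi ⟨(-(p.1 : ℚ)) / (p.2 : ℚ), by push_cast; rw [hphi]⟩
  have h1 : p.1 = 0 := by
    unfold L at hLp
    rw [h2] at hLp
    exact_mod_cast by simpa using hLp
  exact hp (Prod.ext h1 h2)
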